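/- For every concept class 𝓛 over a universe X, PBTD(𝓛) equals the infimum of PBTD(𝓛, ≺) taken over all strict linear orders ≺ on 𝓛. -/
import Mathlib


namespace PBT

variable {X : Type*}

/-- A set `L ⊆ X` is consistent with a set `T` of labeled examples
(label `true` = “+”, label `false` = “−”). -/
def Consistent (L : Set X) (T : Set (X × Bool)) : Prop :=
  ∀ p ∈ T, (p.2 = true → p.1 ∈ L) ∧ (p.2 = false → p.1 ∉ L)

/-- `T` is a teaching set for `L` w.r.t. the concept class `𝓛`:
`L` is the only concept in `𝓛` that is consistent with `T`. -/
def IsTeachingSet (𝓛 : Set (Set X)) (L : Set X) (T : Set (X × Bool)) : Prop :=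
  Consistent L T ∧ ∀ L' ∈ 𝓛, Consistent L' T → L' = L

/-- `TD L 𝓛`: least size of a finite teaching set for `L` w.r.t. `𝓛` (`⊤` if none exists). -/
noncomputable def TD (L : Set X) (𝓛 : Set (Set X)) : ℕ∞ :=
  sInf {n : ℕ∞ | ∃ T : Finset (X × Bool), IsTeachingSet 𝓛 L ↑T ∧ n = T.card}

/-- A positive teaching set, identified with its set of (positively labeled) points. -/
def IsPosTeachingSet (𝓛 : Set (Set X)) (L : Set X) (S : Set X) : Prop :=
  S ⊆ L ∧ ∀ L' ∈ 𝓛, S ⊆ L' → L' = L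

/-- least size of a finite positive teaching set for `L` w.r.t. `𝓛` (`⊤` if none exists). -/
noncomputable def TDpos (L : Set X) (𝓛 : Set (Set X)) : ℕ∞ :=
  sInf {n : ℕ∞ | ∃ S : Finset X, IsPosTeachingSet 𝓛 L ↑S ∧ n = S.card}

/-- A strict partial order (preference relation) on concepts:
`pr L' L` means `L` is strictly preferred over `L'`. -/
def StrictPO (pr : Set X → Set X → Prop) : Prop :=
  (∀ A, ¬ pr A A) ∧ ∀ A B C : Set X, pr A B → pr B C → pr A C

/-- `PBTDord 𝓛 pr = sup_{L ∈ 𝓛} TD(L, 𝓛 \ {L' ∈ 𝓛 | pr L' L})`. -/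
noncomputable def PBTDord (𝓛 : Set (Set X)) (pr : Set X → Set X → Prop) : ℕ∞ :=
  ⨆ L ∈ 𝓛, TD L {L' ∈ 𝓛 | ¬ pr L' L}

/-- preference-based teaching dimension of `𝓛`. -/
noncomputable def PBTD (𝓛 : Set (Set X)) : ℕ∞ :=
  sInf {v : ℕ∞ | ∃ pr, StrictPO pr ∧ v = PBTDord 𝓛 pr}

/-- `PBTDposOrd 𝓛 pr = sup_{L ∈ 𝓛} TD⁺(L, 𝓛 \ {L' ∈ 𝓛 | pr L' L})`. -/
noncomputable def PBTDposOrd (𝓛 : Set (Set X)) (pr : Set X → Set X → Prop) : ℕ∞ :=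
  ⨆ L ∈ 𝓛, TDpos L {L' ∈ 𝓛 | ¬ pr L' L}

/-- positive preference-based teaching dimension of `𝓛`. -/
noncomputable def PBTDpos (𝓛 : Set (Set X)) : ℕ∞ :=
  sInf {v : ℕ∞ | ∃ pr, StrictPO pr ∧ v = PBTDposOrd 𝓛 pr}


lemma TD_mono {L : Set X} {𝓛' 𝓛 : Set (Set X)} (h : 𝓛' ⊆ 𝓛) :
    TD L 𝓛' ≤ TD L 𝓛 := by
  apply sInf_le_sInf
  rintro n ⟨T, ⟨hc, hu⟩, rfl⟩
  exact ⟨T, ⟨hc, fun L' hL' hc' => hu L' (h hL') hc'⟩, rfl⟩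

lemma PBTDord_mono {𝓛 : Set (Set X)} {pr pr' : Set X → Set X → Prop}
    (h : ∀ A B, pr A B → pr' A B) : PBTDord 𝓛 pr' ≤ PBTDord 𝓛 pr := by
  apply iSup₂_mono
  intro L hL
  apply TD_mono
  rintro L' ⟨h1, h2⟩
  exact ⟨h1, fun hp => h2 (h L' L hp)⟩

/-- order extension: every strict partial order extends to a strict linear order. -/
lemma strictPO_extend {pr : Set X → Set X → Prop} (hpr : StrictPO pr) :
    ∃ pr' : Set X → Set X → Prop, StrictPO pr' ∧
      (∀ A B, A ≠ B → pr' A B ∨ pr' B A) ∧ ∀ A B, pr A B → pr' A B := by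
  obtain ⟨hirr, htrans⟩ := hpr
  -- reflexive closure
  let r : Set X → Set X → Prop := fun A B => pr A B ∨ A = B
  have hne : ∀ {A B}, pr A B → A ≠ B := by
    rintro A B h rfl; exact hirr A h
  haveI : IsPartialOrder (Set X) r :=
    { refl := fun A => Or.inr rfl
      trans := by
        rintro A B C (h1 | rfl) (h2 | rfl)
        · exact Or.inl (htrans A B C h1 h2)
        · exact Or.inl h1
        · exact Or.inl h2
        · exact Or.inr rfl
      antisymm := by
        rintro A B h1 h2
        rcases h1 with h1 | rfl
        · rcases h2 with h2 | rfl
          · exact absurd (htrans A B A h1 h2) (hirr A)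
          · rfl
        · rfl }
  obtain ⟨t, ht, hsub⟩ := extend_partialOrder r
  refine ⟨fun A B => t A B ∧ A ≠ B, ⟨?_, ?_⟩, ?_, ?_⟩
  · rintro A ⟨-, h⟩; exact h rfl
  · rintro A B C ⟨h1, hne1⟩ ⟨h2, hne2⟩
    refine ⟨ht.trans A B C h1 h2, ?_⟩
    rintro rfl
    exact hne1 (ht.antisymm _ _ h1 h2)
  · intro A B hAB
    rcases ht.total A B with h | h
    · exact Or.inl ⟨h, hAB⟩
    · exact Or.inr ⟨h, hAB.symm⟩
  · intro A B h
    exact ⟨hsub A B (Or.inl h), hne h⟩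

/-- `PBTD(𝓛)` equals the infimum of `PBTD(𝓛, ≺)` over all strict linear orders `≺` on `𝓛`. -/
theorem pbtd_eq_inf_over_linear_orders {X : Type*} (𝓛 : Set (Set X)) :
    PBTD 𝓛 =
      sInf {v : ℕ∞ | ∃ pr : Set X → Set X → Prop, StrictPO pr ∧
        (∀ L ∈ 𝓛, ∀ L' ∈ 𝓛, L ≠ L' → pr L L' ∨ pr L' L) ∧ v = PBTDord 𝓛 pr} := by
  apply le_antisymm
  · apply sInf_le_sInf
    rintro v ⟨pr, hpr, -, rfl⟩
    exact ⟨pr, hpr, rfl⟩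
  · apply le_sInf
    rintro v ⟨pr, hpr, rfl⟩
    obtain ⟨pr', hpr', htot, hext⟩ := strictPO_extend hpr
    calc sInf {v : ℕ∞ | ∃ pr : Set X → Set X → Prop, StrictPO pr ∧
          (∀ L ∈ 𝓛, ∀ L' ∈ 𝓛, L ≠ L' → pr L L' ∨ pr L' L) ∧ v = PBTDord 𝓛 pr}
        ≤ PBTDord 𝓛 pr' :=
          sInf_le ⟨pr', hpr', fun L _ L' _ h => htot L L' h, rfl⟩
      _ ≤ PBTDord 𝓛 pr := PBTDord_mono hext

end PBT
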